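/- Let n ∈ ℕ, let Δ : MvPolynomial (Fin n) ℝ → MvPolynomial (Fin n) ℝ be the polynomial Laplacian Δp = ∑_{i} ∂ᵢ(∂ᵢ p) (with ∂ᵢ the formal partial derivative pderiv i), and let t > 0 be a real number. Then for every polynomial p ∈ MvPolynomial (Fin n) ℝ, the (finite) sum ∑_{k≥0} (t^k / k!) · (Δ^k p)(0) equals (4πt)^{-n/2} · ∫_{x ∈ EuclideanSpace ℝ (Fin n)} exp(−‖x‖²/(4t)) · p(x) dx, where the integral is with respect to Lebesgue measure and converges absolutely. -/

import Mathlib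

open MvPolynomial MeasureTheory Real Finset

namespace HeatAux



lemma gamma_half (r : ℕ) :
    Real.Gamma ((r : ℝ) + 1/2) = Real.sqrt Real.pi * (2*r).factorial / (4^r * r.factorial) := by
  induction r with
  | zero => rw [show ((0:ℕ):ℝ) + 1/2 = 1/2 by norm_num, Real.Gamma_one_half_eq]; simp
  | succ r ih =>
    have h : ((r+1 : ℕ) : ℝ) + 1/2 = ((r:ℝ) + 1/2) + 1 := by push_cast; ring
    rw [h, Real.Gamma_add_one (by positivity), ih]
    have hf : (2*(r+1)).factorial = (2*r+2) * ((2*r+1) * (2*r).factorial) := by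
      rw [show 2*(r+1) = (2*r+1)+1 by ring, Nat.factorial_succ,
        show 2*r+1 = (2*r)+1 from rfl, Nat.factorial_succ]
    have hg : (r+1).factorial = (r+1) * r.factorial := Nat.factorial_succ r
    rw [hf, hg]
    have h1 : ((2*r).factorial : ℝ) ≠ 0 := Nat.cast_ne_zero.mpr (Nat.factorial_ne_zero _)
    have h2 : (r.factorial : ℝ) ≠ 0 := Nat.cast_ne_zero.mpr (Nat.factorial_ne_zero _)
    have h4 : ((4:ℝ)^r) ≠ 0 := by positivity
    push_cast
    field_simp
    ring



variable {t : ℝ}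

lemma integrable_pow_gauss (ht : 0 < t) (m : ℕ) :
    Integrable (fun x : ℝ => x ^ m * Real.exp (-x^2/(4*t))) := by
  have hb : (0:ℝ) < (4*t)⁻¹ := by positivity
  have h := integrable_rpow_mul_exp_neg_mul_sq hb
    (s := (m:ℝ)) (neg_one_lt_zero.trans_le (Nat.cast_nonneg m))
  simp only [Real.rpow_natCast] at h
  have heq : ∀ x : ℝ, -(4*t)⁻¹ * x^2 = -x^2/(4*t) := fun x => by ring
  simpa only [heq] using h

/-- value used for one-dimensional moments -/
noncomputable def g (t : ℝ) (m : ℕ) : ℝ :=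
  if Even m then t ^ (m/2) * ((m.factorial : ℝ) / ((m/2).factorial : ℝ)) else 0

lemma moment_odd (hm : ¬ Even m) :
    ∫ x : ℝ, x ^ m * Real.exp (-x^2/(4*t)) = 0 := by
  set f : ℝ → ℝ := fun x => x ^ m * Real.exp (-x^2/(4*t)) with hf
  have A : MeasurableEmbedding (fun x : ℝ => -x) :=
    (Homeomorph.neg ℝ).measurableEmbedding
  have h1 : ∫ x : ℝ, f x = ∫ x : ℝ, f (-x) := by
    conv_lhs => rw [← Measure.map_neg_eq_self (volume : Measure ℝ)]
    exact A.integral_map f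
  have h2 : ∀ x : ℝ, f (-x) = - f x := by
    intro x
    simp only [hf, neg_sq]
    rw [(Nat.not_even_iff_odd.mp hm).neg_pow]
    ring
  simp only [h2, integral_neg] at h1
  linarith

lemma moment_even (ht : 0 < t) (r : ℕ) :
    ∫ x : ℝ, x ^ (2*r) * Real.exp (-x^2/(4*t))
      = Real.sqrt (4*Real.pi*t) * (t^r * ((2*r).factorial : ℝ) / (r.factorial : ℝ)) := by
  have hb : (0:ℝ) < (4*t)⁻¹ := by positivity
  have h4t : (0:ℝ) < 4*t := by positivity
  have h1 : (fun x : ℝ => x ^ (2*r) * Real.exp (-x^2/(4*t)))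
      = fun x : ℝ => |x| ^ (2*r) * Real.exp (-|x|^2/(4*t)) := by
    funext x
    rw [(even_two_mul r).pow_abs, sq_abs]
  rw [h1, integral_comp_abs (f := fun x : ℝ => x ^ (2*r) * Real.exp (-x^2/(4*t)))]
  have h2 : ∫ x in Set.Ioi (0:ℝ), x ^ (2*r) * Real.exp (-x^2/(4*t))
      = ∫ x in Set.Ioi (0:ℝ), x ^ ((2*r : ℕ) : ℝ) * Real.exp (-(4*t)⁻¹ * x ^ (2:ℝ)) := by
    refine setIntegral_congr_fun measurableSet_Ioi (fun x hx => ?_)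
    rw [Real.rpow_natCast, Real.rpow_two]
    have : -(4*t)⁻¹ * x^2 = -x^2/(4*t) := by ring
    rw [this]
  rw [h2, integral_rpow_mul_exp_neg_mul_rpow two_pos
    (by exact_mod_cast neg_one_lt_zero.trans_le (Nat.cast_nonneg (2*r))) hb]
  have h3 : (-(((2*r:ℕ):ℝ) + 1) / 2) = -(((r:ℝ)) + 1/2) := by push_cast; ring
  have h4 : ((((2*r:ℕ):ℝ)) + 1) / 2 = (r:ℝ) + 1/2 := by push_cast; ring
  rw [h3, h4, gamma_half r]
  rw [Real.inv_rpow h4t.le, ← Real.rpow_neg h4t.le, neg_neg]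
  rw [Real.rpow_add h4t, Real.rpow_natCast]
  have h5 : (4*t) ^ ((1:ℝ)/2) = Real.sqrt (4*t) := by rw [Real.sqrt_eq_rpow]
  rw [h5]
  have h6 : Real.sqrt (4*Real.pi*t) = Real.sqrt (4*t) * Real.sqrt Real.pi := by
    rw [← Real.sqrt_mul h4t.le]
    ring_nf
  rw [h6]
  have hst : (0:ℝ) < Real.sqrt (4*t) := Real.sqrt_pos.mpr h4t
  have hr : (r.factorial : ℝ) ≠ 0 := Nat.cast_ne_zero.mpr (Nat.factorial_ne_zero _)
  have h4r : ((4:ℝ)^r) ≠ 0 := by positivity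
  field_simp
  ring_nf

lemma moment (ht : 0 < t) (m : ℕ) :
    ∫ x : ℝ, x ^ m * Real.exp (-x^2/(4*t)) = Real.sqrt (4*Real.pi*t) * g t m := by
  by_cases hm : Even m
  · obtain ⟨r, hr⟩ := hm
    have hm2 : m = 2*r := by omega
    subst hm2
    rw [moment_even ht r, g, if_pos ⟨r, by ring⟩]
    have : 2*r/2 = r := by omega
    rw [this]
    ring
  · rw [moment_odd hm, g, if_neg hm, mul_zero]

lemma monomial_integral {n : ℕ} (ht : 0 < t) (α : Fin n →₀ ℕ) :
    Integrable (fun x : EuclideanSpace ℝ (Fin n) =>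
      Real.exp (-‖x‖ ^ 2 / (4 * t)) * MvPolynomial.eval (fun i => x i) (MvPolynomial.monomial α (1:ℝ))) ∧
    (∫ x : EuclideanSpace ℝ (Fin n),
      Real.exp (-‖x‖ ^ 2 / (4 * t)) * MvPolynomial.eval (fun i => x i) (MvPolynomial.monomial α (1:ℝ)))
      = Real.sqrt (4*Real.pi*t) ^ n * ∏ i, g t (α i) := by
  have key : ∀ x : EuclideanSpace ℝ (Fin n),
      Real.exp (-‖x‖ ^ 2 / (4 * t)) * MvPolynomial.eval (fun i => x i) (MvPolynomial.monomial α (1:ℝ))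
        = ∏ i, ((x i) ^ (α i) * Real.exp (-(x i)^2/(4*t))) := by
    intro x
    rw [MvPolynomial.eval_monomial, one_mul, Finsupp.prod_pow]
    have hn : ‖x‖^2 = ∑ i, (x i)^2 := by
      rw [EuclideanSpace.norm_eq]
      rw [Real.sq_sqrt (Finset.sum_nonneg fun i _ => sq_nonneg _)]
      refine Finset.sum_congr rfl fun i _ => ?_
      rw [Real.norm_eq_abs, sq_abs]
    rw [hn, Finset.prod_mul_distrib]
    rw [mul_comm]
    congr 1
    rw [← Real.exp_sum]
    congr 1
    rw [← Finset.sum_div, ← Finset.sum_neg_distrib]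
  have e := (MeasurableEquiv.toLp 2 (Fin n → ℝ)).symm
  have hmp := EuclideanSpace.volume_preserving_symm_measurableEquiv_toLp (Fin n)
  have hint : Integrable (fun y : Fin n → ℝ => ∏ i, ((y i) ^ (α i) * Real.exp (-(y i)^2/(4*t)))) :=
    Integrable.fintype_prod (f := fun i x => x ^ (α i) * Real.exp (-x^2/(4*t)))
      (fun i => integrable_pow_gauss ht (α i))
  have hcomp : Integrable ((fun y : Fin n → ℝ => ∏ i, ((y i) ^ (α i) * Real.exp (-(y i)^2/(4*t))))
      ∘ ((MeasurableEquiv.toLp 2 (Fin n → ℝ)).symm)) :=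
    (hmp.integrable_comp_emb ((MeasurableEquiv.toLp 2 (Fin n → ℝ)).symm).measurableEmbedding).mpr hint
  constructor
  · refine hcomp.congr (Filter.Eventually.of_forall fun x => ?_)
    exact (key x).symm
  · rw [MeasureTheory.integral_congr_ae (Filter.Eventually.of_forall key)]
    have := hmp.integral_comp' (f := (MeasurableEquiv.toLp 2 (Fin n → ℝ)).symm)
      (g := fun y : Fin n → ℝ => ∏ i, ((y i) ^ (α i) * Real.exp (-(y i)^2/(4*t))))
    rw [show (fun x : EuclideanSpace ℝ (Fin n) => ∏ i, ((x i) ^ (α i) * Real.exp (-(x i)^2/(4*t))))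
      = (fun y : Fin n → ℝ => ∏ i, ((y i) ^ (α i) * Real.exp (-(y i)^2/(4*t))))
        ∘ ((MeasurableEquiv.toLp 2 (Fin n → ℝ)).symm) from rfl]
    rw [show ∫ x : EuclideanSpace ℝ (Fin n),
        ((fun y : Fin n → ℝ => ∏ i, ((y i) ^ (α i) * Real.exp (-(y i)^2/(4*t))))
        ∘ ((MeasurableEquiv.toLp 2 (Fin n → ℝ)).symm)) x = ∫ y : Fin n → ℝ,
        ∏ i, ((y i) ^ (α i) * Real.exp (-(y i)^2/(4*t))) from this]
    rw [MeasureTheory.volume_pi, MeasureTheory.integral_fintype_prod_eq_prod (ι := Fin n) (μ := fun _ => volume)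
      (f := fun i x => x ^ (α i) * Real.exp (-x^2/(4*t)))]
    rw [Finset.prod_congr rfl (fun i _ => moment ht (α i))]
    rw [Finset.prod_mul_distrib, Finset.prod_const, Finset.card_univ, Fintype.card_fin]



lemma eval_iter (n : ℕ) (Δ : MvPolynomial (Fin n) ℝ → MvPolynomial (Fin n) ℝ)
    (hΔ : ∀ q : MvPolynomial (Fin n) ℝ, Δ q = ∑ i : Fin n, pderiv i (pderiv i q)) :
    ∀ (k : ℕ) (α : Fin n →₀ ℕ),
      eval (0 : Fin n → ℝ) (Δ^[k] (monomial α (1:ℝ))) =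
        if (∀ i, Even (α i)) ∧ (∑ i, α i) = 2 * k
        then (k.factorial : ℝ) * ∏ i, ((α i).factorial : ℝ) / ((α i / 2).factorial : ℝ)
        else 0 := by
  classical
  -- linearity facts
  have hDadd : ∀ p q, Δ (p + q) = Δ p + Δ q := by
    intro p q; simp [hΔ, map_add, Finset.sum_add_distrib]
  have hDsmul : ∀ (c : ℝ) p, Δ (c • p) = c • Δ p := by
    intro c p; simp [hΔ, _root_.map_smul, Finset.smul_sum]
  have hD0 : Δ 0 = 0 := by simp [hΔ]
  have hI0 : ∀ k, Δ^[k] (0 : MvPolynomial (Fin n) ℝ) = 0 := by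
    intro k; induction k with
    | zero => rfl
    | succ k ih => rw [Function.iterate_succ_apply, hD0, ih]
  have hIadd : ∀ k (p q : MvPolynomial (Fin n) ℝ), Δ^[k] (p + q) = Δ^[k] p + Δ^[k] q := by
    intro k; induction k with
    | zero => intro p q; rfl
    | succ k ih => intro p q; rw [Function.iterate_succ_apply, hDadd, ih,
        Function.iterate_succ_apply, Function.iterate_succ_apply]
  have hIsmul : ∀ k (c : ℝ) (p : MvPolynomial (Fin n) ℝ), Δ^[k] (c • p) = c • Δ^[k] p := by
    intro k; induction k with
    | zero => intro c p; rfl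
    | succ k ih => intro c p; rw [Function.iterate_succ_apply, hDsmul, ih,
        Function.iterate_succ_apply]
  have hIsum : ∀ k (f : Fin n → MvPolynomial (Fin n) ℝ),
      Δ^[k] (∑ i, f i) = ∑ i, Δ^[k] (f i) := by
    intro k f
    induction (Finset.univ : Finset (Fin n)) using Finset.cons_induction with
    | empty => rw [Finset.sum_empty, Finset.sum_empty, hI0]
    | cons a s ha ih => rw [Finset.sum_cons, hIadd, ih, Finset.sum_cons]
  -- action on monomials
  have hmono : ∀ (α : Fin n →₀ ℕ), Δ (monomial α (1:ℝ)) =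
      ∑ i : Fin n, ((α i * (α i - 1) : ℕ) : ℝ) • monomial (α - Finsupp.single i 2) (1:ℝ) := by
    intro α
    rw [hΔ]
    refine Finset.sum_congr rfl fun i _ => ?_
    rw [pderiv_monomial, pderiv_monomial, smul_monomial]
    have hexp : α - Finsupp.single i 1 - Finsupp.single i 1 = α - Finsupp.single i 2 := by
      rw [tsub_tsub, ← Finsupp.single_add]
    rw [hexp]
    congr 1
    rw [Finsupp.tsub_apply, Finsupp.single_eq_same, smul_eq_mul, mul_one, one_mul, Nat.cast_mul]
  intro k
  induction k with
  | zero =>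
    intro α
    simp only [Function.iterate_zero, id_eq, mul_zero]
    rcases eq_or_ne α 0 with rfl | hα
    · rw [if_pos ⟨fun i => by simp, by simp⟩]
      simp [eval_monomial]
    · have h1 : eval (0 : Fin n → ℝ) (monomial α (1:ℝ)) = 0 := by
        rw [eval_monomial, one_mul]
        obtain ⟨i, hi⟩ := Finsupp.ne_iff.mp hα
        simp only [Finsupp.coe_zero, Pi.zero_apply] at hi
        exact Finset.prod_eq_zero (Finsupp.mem_support_iff.mpr hi) (by simp [zero_pow hi])
      rw [h1, if_neg]
      rintro ⟨-, hs⟩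
      apply hα
      ext i
      exact Finset.sum_eq_zero_iff.mp hs i (Finset.mem_univ i)
  | succ k ih =>
    intro α
    rw [Function.iterate_succ_apply, hmono α, hIsum]
    simp only [hIsmul k]
    rw [map_sum]
    simp only [smul_eval, ih]
    -- now a purely combinatorial identity
    have hsub : ∀ (i j : Fin n), ((α - Finsupp.single i 2 : Fin n →₀ ℕ)) j = if j = i then α i - 2 else α j := by
      intro i j
      rw [Finsupp.tsub_apply, Finsupp.single_apply]
      by_cases h : j = i
      · subst h; rw [if_pos rfl, if_pos rfl]
      · rw [if_neg (fun heq => h heq.symm), if_neg h, tsub_zero]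
    have hsumsub : ∀ i : Fin n, 2 ≤ α i →
        (∑ j, ((α - Finsupp.single i 2 : Fin n →₀ ℕ)) j) = (∑ j, α j) - 2 := by
      intro i hge
      have e1 : ∑ j, ((α - Finsupp.single i 2 : Fin n →₀ ℕ)) j
          = (α i - 2) + ∑ j ∈ Finset.univ.erase i, α j := by
        rw [← Finset.add_sum_erase _ _ (Finset.mem_univ i), hsub i i, if_pos rfl]
        congr 1
        exact Finset.sum_congr rfl fun j hj =>
          by rw [hsub i j, if_neg (Finset.mem_erase.mp hj).1]
      have e2 : ∑ j, α j = α i + ∑ j ∈ Finset.univ.erase i, α j :=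
        (Finset.add_sum_erase _ _ (Finset.mem_univ i)).symm
      omega
    by_cases hc : (∀ i, Even (α i)) ∧ (∑ i, α i) = 2 * (k+1)
    · rw [if_pos hc]
      obtain ⟨hev, hsum⟩ := hc
      have hterm : ∀ i : Fin n,
          ((α i * (α i - 1) : ℕ) : ℝ) *
            (if (∀ j, Even (((α - Finsupp.single i 2 : Fin n →₀ ℕ)) j)) ∧
                (∑ j, ((α - Finsupp.single i 2 : Fin n →₀ ℕ)) j) = 2 * k
             then (k.factorial : ℝ) *
               ∏ j, ((((α - Finsupp.single i 2 : Fin n →₀ ℕ)) j).factorial : ℝ) /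
                 (((((α - Finsupp.single i 2 : Fin n →₀ ℕ)) j) / 2).factorial : ℝ)
             else 0)
          = ((α i / 2 : ℕ) : ℝ) *
              ((k.factorial : ℝ) * ∏ j, ((α j).factorial : ℝ) / ((α j / 2).factorial : ℝ)) := by
        intro i
        rcases Nat.lt_or_ge (α i) 2 with hlt | hge
        · have h0 : α i = 0 := by
            obtain ⟨c, hc'⟩ := hev i; omega
          simp [h0]
        · have hcond : (∀ j, Even (((α - Finsupp.single i 2 : Fin n →₀ ℕ)) j)) ∧
              (∑ j, ((α - Finsupp.single i 2 : Fin n →₀ ℕ)) j) = 2 * k := by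
            constructor
            · intro j
              rw [hsub i j]
              by_cases h : j = i
              · rw [if_pos h]
                obtain ⟨c, hc'⟩ := hev i
                exact ⟨c - 1, by omega⟩
              · rw [if_neg h]; exact hev j
            · rw [hsumsub i hge, hsum]; omega
          rw [if_pos hcond]
          have hprodβ : ∏ j, ((((α - Finsupp.single i 2 : Fin n →₀ ℕ)) j).factorial : ℝ) /
                (((((α - Finsupp.single i 2 : Fin n →₀ ℕ)) j) / 2).factorial : ℝ)
              = (((α i - 2).factorial : ℝ) / (((α i - 2) / 2).factorial : ℝ)) *
                ∏ j ∈ Finset.univ.erase i, ((α j).factorial : ℝ) / ((α j / 2).factorial : ℝ) := by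
            rw [← Finset.mul_prod_erase _ _ (Finset.mem_univ i), hsub i i, if_pos rfl]
            congr 1
            exact Finset.prod_congr rfl fun j hj =>
              by rw [hsub i j, if_neg (Finset.mem_erase.mp hj).1]
          have hprodα : ∏ j, ((α j).factorial : ℝ) / ((α j / 2).factorial : ℝ)
              = (((α i).factorial : ℝ) / (((α i) / 2).factorial : ℝ)) *
                ∏ j ∈ Finset.univ.erase i, ((α j).factorial : ℝ) / ((α j / 2).factorial : ℝ) :=
            (Finset.mul_prod_erase _ _ (Finset.mem_univ i)).symm
          rw [hprodβ, hprodα]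
          -- key scalar identity
          have key : (α i * (α i - 1)) * (α i - 2).factorial * (α i / 2).factorial
              = (α i / 2) * (α i).factorial * ((α i - 2) / 2).factorial := by
            obtain ⟨c, hc'⟩ := hev i
            obtain ⟨s, hs⟩ : ∃ s, c = s + 1 := ⟨c - 1, by omega⟩
            have h2 : α i = 2*s + 2 := by omega
            rw [h2, show 2*s+2-1 = 2*s+1 by omega, show 2*s+2-2 = 2*s by omega,
              show (2*s+2)/2 = s+1 by omega, show (2*s)/2 = s by omega,
              show (2*s+2) = (2*s+1)+1 by omega, Nat.factorial_succ (2*s+1),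
              Nat.factorial_succ (2*s), Nat.factorial_succ s]
            ring
          have hne1 : (((α i / 2).factorial : ℝ)) ≠ 0 :=
            Nat.cast_ne_zero.mpr (Nat.factorial_ne_zero _)
          have hne2 : ((((α i - 2) / 2).factorial : ℝ)) ≠ 0 :=
            Nat.cast_ne_zero.mpr (Nat.factorial_ne_zero _)
          have keyR : ((α i * (α i - 1) : ℕ) : ℝ) *
              (((α i - 2).factorial : ℝ) / (((α i - 2) / 2).factorial : ℝ))
              = ((α i / 2 : ℕ) : ℝ) * (((α i).factorial : ℝ) / (((α i) / 2).factorial : ℝ)) := by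
            rw [mul_div_assoc', mul_div_assoc', div_eq_div_iff hne2 hne1]
            exact_mod_cast congrArg (Nat.cast : ℕ → ℝ) key
          linear_combination ((k.factorial : ℝ) *
            ∏ j ∈ Finset.univ.erase i, ((α j).factorial : ℝ) / ((α j / 2).factorial : ℝ)) * keyR
      rw [Finset.sum_congr rfl (fun i _ => hterm i), ← Finset.sum_mul]
      have hhalf : ∑ i, α i / 2 = k + 1 := by
        have h2 : ∑ i : Fin n, α i = ∑ i : Fin n, 2 * (α i / 2) :=
          Finset.sum_congr rfl fun i _ => by obtain ⟨c, hc'⟩ := hev i; omega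
        rw [h2, ← Finset.mul_sum] at hsum
        omega
      have hcast : ∑ i : Fin n, ((α i / 2 : ℕ) : ℝ) = ((k : ℝ) + 1) := by
        rw [← Nat.cast_sum, hhalf]; push_cast; ring
      rw [hcast, Nat.factorial_succ]
      push_cast
      ring
    · rw [if_neg hc]
      refine Finset.sum_eq_zero fun i _ => ?_
      rcases Nat.lt_or_ge (α i) 2 with hlt | hge
      · have h01 : α i = 0 ∨ α i = 1 := by omega
        have h0 : α i * (α i - 1) = 0 := by rcases h01 with h | h <;> simp [h]
        rw [h0, Nat.cast_zero, zero_mul]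
      · rw [if_neg, mul_zero]
        rintro ⟨hev', hsum'⟩
        apply hc
        constructor
        · intro j
          by_cases hji : j = i
          · subst hji
            have := hev' j
            rw [hsub j j, if_pos rfl] at this
            obtain ⟨c, hc'⟩ := this
            exact ⟨c + 1, by omega⟩
          · have := hev' j
            rwa [hsub i j, if_neg hji] at this
        · have hle : α i ≤ ∑ j, α j :=
            Finset.single_le_sum (f := fun j => α j) (fun _ _ => Nat.zero_le _) (Finset.mem_univ i)
          rw [hsumsub i hge] at hsum'
          omega




lemma tsum_F (t : ℝ) {n : ℕ} (α : Fin n →₀ ℕ) :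
    ∑' k : ℕ, (t^k / (k.factorial : ℝ)) *
      (if (∀ i, Even (α i)) ∧ (∑ i, α i) = 2 * k
       then (k.factorial : ℝ) * ∏ i, ((α i).factorial : ℝ) / ((α i / 2).factorial : ℝ)
       else 0)
    = ∏ i, g t (α i) := by
  by_cases hev : ∀ i, Even (α i)
  · set K := ∑ i : Fin n, α i / 2 with hK
    have h2K : ∑ i : Fin n, α i = 2 * K := by
      rw [hK, Finset.mul_sum]
      exact Finset.sum_congr rfl fun i _ => by obtain ⟨c, hc⟩ := hev i; omega
    rw [tsum_eq_single K]
    · rw [if_pos ⟨hev, h2K⟩]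
      have hKf : ((K.factorial : ℝ)) ≠ 0 := Nat.cast_ne_zero.mpr (Nat.factorial_ne_zero _)
      rw [show ∏ i, g t (α i)
          = ∏ i, (t ^ (α i / 2) * (((α i).factorial : ℝ) / ((α i / 2).factorial : ℝ))) from
        Finset.prod_congr rfl fun i _ => by rw [g, if_pos (hev i)]]
      rw [Finset.prod_mul_distrib, Finset.prod_pow_eq_pow_sum]
      field_simp
      ring
    · intro k hk
      rw [if_neg, mul_zero]
      rintro ⟨-, hs⟩
      exact hk (by omega)
  · have hz : ∀ k : ℕ, (t^k / (k.factorial : ℝ)) *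
        (if (∀ i, Even (α i)) ∧ (∑ i, α i) = 2 * k
         then (k.factorial : ℝ) * ∏ i, ((α i).factorial : ℝ) / ((α i / 2).factorial : ℝ)
         else 0) = 0 :=
      fun k => by rw [if_neg (fun h => hev h.1), mul_zero]
    rw [tsum_congr hz, tsum_zero]
    push_neg at hev
    obtain ⟨i, hi⟩ := hev
    exact (Finset.prod_eq_zero (Finset.mem_univ i) (by rw [g, if_neg hi])).symm


end HeatAux

open HeatAux

/-- The heat operator `exp(tΔ)` evaluated at the origin, applied to a polynomial `p`,
equals the Gaussian integral `(4πt)^{-n/2} ∫ exp(-‖x‖²/(4t)) p(x) dx`, and the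
integrand is Lebesgue integrable. -/
theorem heat_operator_eq_gaussian_integral
    (n : ℕ) (Δ : MvPolynomial (Fin n) ℝ → MvPolynomial (Fin n) ℝ)
    (hΔ : ∀ q : MvPolynomial (Fin n) ℝ, Δ q = ∑ i : Fin n, pderiv i (pderiv i q))
    (t : ℝ) (ht : 0 < t) (p : MvPolynomial (Fin n) ℝ) :
    Integrable (fun x : EuclideanSpace ℝ (Fin n) =>
      Real.exp (-‖x‖ ^ 2 / (4 * t)) * eval (fun i => x i) p) ∧
    ∑' k : ℕ, (t ^ k / (Nat.factorial k : ℝ)) * eval (0 : Fin n → ℝ) (Δ^[k] p)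
      = (4 * Real.pi * t) ^ (-(n : ℝ) / 2) *
        ∫ x : EuclideanSpace ℝ (Fin n),
          Real.exp (-‖x‖ ^ 2 / (4 * t)) * eval (fun i => x i) p := by
  classical
  have hp : p = ∑ d ∈ p.support, monomial d (coeff d p) := (support_sum_monomial_coeff p).symm
  -- linearity of the iterates
  have hDadd : ∀ q r, Δ (q + r) = Δ q + Δ r := by
    intro q r; simp [hΔ, map_add, Finset.sum_add_distrib]
  have hDsmul : ∀ (c : ℝ) q, Δ (c • q) = c • Δ q := by
    intro c q; simp [hΔ, _root_.map_smul, Finset.smul_sum]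
  have hD0 : Δ 0 = 0 := by simp [hΔ]
  have hI0 : ∀ k, Δ^[k] (0 : MvPolynomial (Fin n) ℝ) = 0 := by
    intro k; induction k with
    | zero => rfl
    | succ k ih => rw [Function.iterate_succ_apply, hD0, ih]
  have hIadd : ∀ k (q r : MvPolynomial (Fin n) ℝ), Δ^[k] (q + r) = Δ^[k] q + Δ^[k] r := by
    intro k; induction k with
    | zero => intro q r; rfl
    | succ k ih => intro q r; rw [Function.iterate_succ_apply, hDadd, ih,
        Function.iterate_succ_apply, Function.iterate_succ_apply]
  have hIsmul : ∀ k (c : ℝ) (q : MvPolynomial (Fin n) ℝ), Δ^[k] (c • q) = c • Δ^[k] q := by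
    intro k; induction k with
    | zero => intro c q; rfl
    | succ k ih => intro c q; rw [Function.iterate_succ_apply, hDsmul, ih,
        Function.iterate_succ_apply]
  have hIsum : ∀ k (s : Finset (Fin n →₀ ℕ)) (f : (Fin n →₀ ℕ) → MvPolynomial (Fin n) ℝ),
      Δ^[k] (∑ d ∈ s, f d) = ∑ d ∈ s, Δ^[k] (f d) := by
    intro k s f
    induction s using Finset.cons_induction with
    | empty => rw [Finset.sum_empty, Finset.sum_empty, hI0]
    | cons a s ha ih => rw [Finset.sum_cons, hIadd, ih, Finset.sum_cons]
  have hmono1 : ∀ d : Fin n →₀ ℕ, (monomial d) (coeff d p) = coeff d p • (monomial d (1:ℝ)) := by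
    intro d; rw [smul_monomial, smul_eq_mul, mul_one]
  have hLk : ∀ k, eval (0 : Fin n → ℝ) (Δ^[k] p)
      = ∑ d ∈ p.support, coeff d p * eval (0 : Fin n → ℝ) (Δ^[k] (monomial d (1:ℝ))) := by
    intro k
    conv_lhs => rw [hp]
    rw [hIsum, map_sum]
    refine Finset.sum_congr rfl fun d _ => ?_
    rw [hmono1 d, hIsmul, smul_eval]
  have hfun : (fun x : EuclideanSpace ℝ (Fin n) =>
        Real.exp (-‖x‖ ^ 2 / (4 * t)) * eval (fun i => x i) p)
      = fun x => ∑ d ∈ p.support, coeff d p *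
          (Real.exp (-‖x‖ ^ 2 / (4 * t)) * eval (fun i => x i) (monomial d (1:ℝ))) := by
    funext x
    conv_lhs => rw [hp]
    rw [map_sum, Finset.mul_sum]
    refine Finset.sum_congr rfl fun d _ => ?_
    rw [hmono1 d, smul_eval]
    ring
  constructor
  · rw [hfun]
    exact integrable_finset_sum _ fun d _ => ((monomial_integral ht d).1.const_mul _)
  · have hL : ∑' k : ℕ, (t ^ k / (Nat.factorial k : ℝ)) * eval (0 : Fin n → ℝ) (Δ^[k] p)
        = ∑ d ∈ p.support, coeff d p * ∏ i, g t (d i) := by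
      have h1 : ∀ k : ℕ, (t ^ k / (Nat.factorial k : ℝ)) * eval (0 : Fin n → ℝ) (Δ^[k] p)
          = ∑ d ∈ p.support, coeff d p * ((t ^ k / (Nat.factorial k : ℝ)) *
              (if (∀ i, Even (d i)) ∧ (∑ i, d i) = 2 * k
               then (k.factorial : ℝ) * ∏ i, ((d i).factorial : ℝ) / ((d i / 2).factorial : ℝ)
               else 0)) := by
        intro k
        rw [hLk k, Finset.mul_sum]
        refine Finset.sum_congr rfl fun d _ => ?_
        rw [eval_iter n Δ hΔ k d]
        ring
      rw [tsum_congr h1, Summable.tsum_finsetSum ?_]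
      · exact Finset.sum_congr rfl fun d _ => by rw [tsum_mul_left, tsum_F t d]
      · intro d _
        apply summable_of_ne_finset_zero (s := {(∑ i, d i)/2})
        intro k hk
        simp only [Finset.mem_singleton] at hk
        rw [if_neg, mul_zero, mul_zero]
        rintro ⟨-, hs⟩
        exact hk (by omega)
    have hR : (∫ x : EuclideanSpace ℝ (Fin n),
          Real.exp (-‖x‖ ^ 2 / (4 * t)) * eval (fun i => x i) p)
        = ∑ d ∈ p.support, coeff d p *
            (Real.sqrt (4*Real.pi*t) ^ n * ∏ i, g t (d i)) := by
      rw [hfun, integral_finset_sum _ (fun d _ => ((monomial_integral ht d).1.const_mul _))]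
      exact Finset.sum_congr rfl fun d _ => by
        rw [integral_const_mul, (monomial_integral ht d).2]
    rw [hL, hR, Finset.mul_sum]
    refine Finset.sum_congr rfl fun d _ => ?_
    have hpos : (0:ℝ) < 4*Real.pi*t := by positivity
    have hone : (4*Real.pi*t) ^ (-(n:ℝ)/2) * (Real.sqrt (4*Real.pi*t))^n = 1 := by
      rw [Real.sqrt_eq_rpow, ← Real.rpow_natCast ((4*Real.pi*t) ^ ((1:ℝ)/2)) n,
        ← Real.rpow_mul hpos.le, ← Real.rpow_add hpos,
        show -(n:ℝ)/2 + 1/2*(n:ℝ) = 0 by ring, Real.rpow_zero]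
    calc coeff d p * ∏ i, g t (d i)
        = ((4*Real.pi*t) ^ (-(n:ℝ)/2) * (Real.sqrt (4*Real.pi*t))^n) *
            (coeff d p * ∏ i, g t (d i)) := by rw [hone, one_mul]
      _ = (4*Real.pi*t) ^ (-(n:ℝ)/2) *
            (coeff d p * ((Real.sqrt (4*Real.pi*t))^n * ∏ i, g t (d i))) := by ring
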